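/- Suppose for each e in an index set I, the map φ_e : X → X satisfies ||φ_e'(y)| - |φ_e'(x)|| ≤ (L/‖(φ_e')^{-1}‖) ‖y-x‖^α for all x,y, where L ≥ 1, α > 0, and the contraction ratios satisfy |φ_e'| ≤ s < 1. Then for every finite word ω = ω₁⋯ω_n and all x, y: |log|φ_ω'(y)| - log|φ_ω'(x)|| ≤ (L/(1-s^α))·‖y-x‖^α, where φ_ω = φ_{ω₁} ∘ ⋯ ∘ φ_{ω_n}. -/
import Mathlib


/-- The composition `φ_ω = φ_{ω₁} ∘ ⋯ ∘ φ_{ω_n}` coded by a finite word `ω`. -/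
def compW {E : Type*} {I : Type*} (φ : I → E → E) : List I → E → E
  | [], x => x
  | e :: ω, x => φ e (compW φ ω x)

/-- The derivative modulus `|φ_ω'(x)|` of the composition, via the chain rule:
`|φ_ω'(x)| = |φ_{ω₁}'(φ_{σω}(x))| ⋯`. Here `Dm e x` models `|φ_e'(x)|`. -/
def derW {E : Type*} {I : Type*} (φ : I → E → E) (Dm : I → E → ℝ) : List I → E → ℝ
  | [], _ => 1
  | e :: ω, x => Dm e (compW φ ω x) * derW φ Dm ω x

lemma log_sub_log_le_aux {x y : ℝ} (hx : 0 < x) (hxy : x ≤ y) :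
    Real.log y - Real.log x ≤ x⁻¹ * (y - x) := by
  have hy : 0 < y := lt_of_lt_of_le hx hxy
  have h := Real.log_le_sub_one_of_pos (div_pos hy hx)
  rw [Real.log_div hy.ne' hx.ne'] at h
  calc Real.log y - Real.log x ≤ y / x - 1 := h
    _ = x⁻¹ * (y - x) := by field_simp

lemma abs_log_sub_log_le {x y M : ℝ} (hx : 0 < x) (hy : 0 < y)
    (hMx : x⁻¹ ≤ M) (hMy : y⁻¹ ≤ M) :
    |Real.log y - Real.log x| ≤ M * |y - x| := by
  rcases le_total x y with h | h
  · rw [abs_of_nonneg (by linarith [Real.log_le_log hx h] :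
      (0:ℝ) ≤ Real.log y - Real.log x), abs_of_nonneg (by linarith : (0:ℝ) ≤ y - x)]
    calc Real.log y - Real.log x ≤ x⁻¹ * (y - x) := log_sub_log_le_aux hx h
      _ ≤ M * (y - x) := by
          exact mul_le_mul_of_nonneg_right hMx (by linarith)
  · rw [abs_sub_comm, abs_sub_comm y x,
      abs_of_nonneg (by linarith [Real.log_le_log hy h] :
        (0:ℝ) ≤ Real.log x - Real.log y), abs_of_nonneg (by linarith : (0:ℝ) ≤ x - y)]
    calc Real.log x - Real.log y ≤ y⁻¹ * (x - y) := log_sub_log_le_aux hy h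
      _ ≤ M * (x - y) := mul_le_mul_of_nonneg_right hMy (by linarith)

/-- Lemma 2.3: if each contraction `φ_e` of a cIFS satisfies the distortion condition
`||φ_e'(y)| - |φ_e'(x)|| ≤ (L / ‖(φ_e')⁻¹‖_X) ‖y - x‖^α` with `0 < |φ_e'| ≤ s < 1`,
then for every finite word `ω` and all `x, y ∈ X`,
`|log|φ_ω'(y)| - log|φ_ω'(x)|| ≤ (L/(1 - s^α)) ‖y - x‖^α`. -/
theorem log_der_holder {D : ℕ} (I : Type*)
    (X : Set (EuclideanSpace ℝ (Fin D))) (hXc : IsCompact X) (hXconn : IsConnected X)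
    (φ : I → EuclideanSpace ℝ (Fin D) → EuclideanSpace ℝ (Fin D))
    (Dm : I → EuclideanSpace ℝ (Fin D) → ℝ)
    (s L a : ℝ) (hs0 : 0 < s) (hs1 : s < 1) (hL : 1 ≤ L) (ha : 0 < a)
    (hmaps : ∀ e, Set.MapsTo (φ e) X X)
    (hinj : ∀ e, Set.InjOn (φ e) X)
    (hpos : ∀ e, ∀ x ∈ X, 0 < Dm e x)
    (hcontr : ∀ e, ∀ x ∈ X, Dm e x ≤ s)
    (hlip : ∀ e, ∀ x ∈ X, ∀ y ∈ X, dist (φ e x) (φ e y) ≤ s * dist x y)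
    (hhold : ∀ e, ∀ x ∈ X, ∀ y ∈ X,
      |Dm e y - Dm e x| ≤ L / sSup ((fun z => (Dm e z)⁻¹) '' X) * dist y x ^ a) :
    ∀ ω : List I, ∀ x ∈ X, ∀ y ∈ X,
      |Real.log (derW φ Dm ω y) - Real.log (derW φ Dm ω x)| ≤
        L / (1 - s ^ a) * dist y x ^ a := by
  -- single-map log Hölder bound
  have hstep : ∀ e, ∀ x ∈ X, ∀ y ∈ X,
      |Real.log (Dm e y) - Real.log (Dm e x)| ≤ L * dist y x ^ a := by
    intro e x hx y hy
    set M := sSup ((fun z => (Dm e z)⁻¹) '' X) with hM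
    by_cases hB : BddAbove ((fun z => (Dm e z)⁻¹) '' X)
    · have hMx : (Dm e x)⁻¹ ≤ M := le_csSup hB ⟨x, hx, rfl⟩
      have hMy : (Dm e y)⁻¹ ≤ M := le_csSup hB ⟨y, hy, rfl⟩
      have hMpos : 0 < M := lt_of_lt_of_le (inv_pos.mpr (hpos e x hx)) hMx
      calc |Real.log (Dm e y) - Real.log (Dm e x)| ≤ M * |Dm e y - Dm e x| :=
            abs_log_sub_log_le (hpos e x hx) (hpos e y hy) hMx hMy
        _ ≤ M * (L / M * dist y x ^ a) :=
            mul_le_mul_of_nonneg_left (hhold e x hx y hy) hMpos.le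
        _ = L * dist y x ^ a := by field_simp
    · have hM0 : M = 0 := Real.sSup_of_not_bddAbove hB
      have h := hhold e x hx y hy
      rw [← hM, hM0] at h
      simp only [div_zero, zero_mul] at h
      have : Dm e y = Dm e x := by
        have := abs_nonneg (Dm e y - Dm e x)
        have h2 : |Dm e y - Dm e x| = 0 := le_antisymm h this
        have := abs_eq_zero.mp h2
        linarith
      rw [this, sub_self, abs_zero]
      exact mul_nonneg (by linarith) (Real.rpow_nonneg dist_nonneg a)
  have hcomp : ∀ ω : List I, ∀ x ∈ X, compW φ ω x ∈ X := by
    intro ω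
    induction ω with
    | nil => intro x hx; exact hx
    | cons e ω ih => intro x hx; exact hmaps e (ih x hx)
  have hdpos : ∀ ω : List I, ∀ x ∈ X, 0 < derW φ Dm ω x := by
    intro ω
    induction ω with
    | nil => intro x hx; simp [derW]
    | cons e ω ih =>
        intro x hx
        exact mul_pos (hpos e _ (hcomp ω x hx)) (ih x hx)
  have hdist : ∀ ω : List I, ∀ x ∈ X, ∀ y ∈ X,
      dist (compW φ ω y) (compW φ ω x) ≤ s ^ ω.length * dist y x := by
    intro ω
    induction ω with
    | nil => intro x hx y hy; simp [compW]
    | cons e ω ih =>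
        intro x hx y hy
        calc dist (compW φ (e :: ω) y) (compW φ (e :: ω) x)
            ≤ s * dist (compW φ ω y) (compW φ ω x) :=
              hlip e _ (hcomp ω y hy) _ (hcomp ω x hx)
          _ ≤ s * (s ^ ω.length * dist y x) :=
              mul_le_mul_of_nonneg_left (ih x hx y hy) hs0.le
          _ = s ^ (e :: ω).length * dist y x := by
              simp [List.length_cons, pow_succ]; ring
  have hsa1 : s ^ a < 1 := Real.rpow_lt_one hs0.le hs1 ha
  have hsa0 : 0 < s ^ a := Real.rpow_pos_of_pos hs0 a
  have key : ∀ ω : List I, ∀ x ∈ X, ∀ y ∈ X,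
      |Real.log (derW φ Dm ω y) - Real.log (derW φ Dm ω x)| ≤
        L * (∑ k ∈ Finset.range ω.length, (s ^ a) ^ k) * dist y x ^ a := by
    intro ω
    induction ω with
    | nil => intro x hx y hy; simp [derW]
    | cons e ω ih =>
        intro x hx y hy
        have hcx := hcomp ω x hx
        have hcy := hcomp ω y hy
        have hlog : ∀ z ∈ X, Real.log (derW φ Dm (e :: ω) z) =
            Real.log (Dm e (compW φ ω z)) + Real.log (derW φ Dm ω z) := by
          intro z hz
          exact Real.log_mul (hpos e _ (hcomp ω z hz)).ne' (hdpos ω z hz).ne'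
        rw [hlog x hx, hlog y hy]
        have hterm1 : |Real.log (Dm e (compW φ ω y)) - Real.log (Dm e (compW φ ω x))| ≤
            L * ((s ^ a) ^ ω.length * dist y x ^ a) := by
          have h1 := hstep e _ hcx _ hcy
          have h2 : dist (compW φ ω y) (compW φ ω x) ^ a ≤
              (s ^ ω.length * dist y x) ^ a :=
            Real.rpow_le_rpow dist_nonneg (hdist ω x hx y hy) ha.le
          have hpowa : (s ^ ω.length : ℝ) ^ a = (s ^ a) ^ ω.length := by
            rw [← Real.rpow_natCast s ω.length, ← Real.rpow_natCast (s ^ a) ω.length,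
              ← Real.rpow_mul hs0.le, ← Real.rpow_mul hs0.le, mul_comm]
          have h3 : (s ^ ω.length * dist y x) ^ a = (s ^ a) ^ ω.length * dist y x ^ a := by
            rw [Real.mul_rpow (pow_nonneg hs0.le _) dist_nonneg, hpowa]
          calc |Real.log (Dm e (compW φ ω y)) - Real.log (Dm e (compW φ ω x))|
              ≤ L * dist (compW φ ω y) (compW φ ω x) ^ a := h1
            _ ≤ L * ((s ^ a) ^ ω.length * dist y x ^ a) := by
                rw [← h3]
                exact mul_le_mul_of_nonneg_left h2 (by linarith)
        calc |Real.log (Dm e (compW φ ω y)) + Real.log (derW φ Dm ω y) -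
              (Real.log (Dm e (compW φ ω x)) + Real.log (derW φ Dm ω x))|
            ≤ |Real.log (Dm e (compW φ ω y)) - Real.log (Dm e (compW φ ω x))| +
              |Real.log (derW φ Dm ω y) - Real.log (derW φ Dm ω x)| := by
              rw [show Real.log (Dm e (compW φ ω y)) + Real.log (derW φ Dm ω y) -
                (Real.log (Dm e (compW φ ω x)) + Real.log (derW φ Dm ω x)) =
                (Real.log (Dm e (compW φ ω y)) - Real.log (Dm e (compW φ ω x))) +
                (Real.log (derW φ Dm ω y) - Real.log (derW φ Dm ω x)) by ring]
              exact abs_add_le _ _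
          _ ≤ L * ((s ^ a) ^ ω.length * dist y x ^ a) +
              L * (∑ k ∈ Finset.range ω.length, (s ^ a) ^ k) * dist y x ^ a :=
              add_le_add hterm1 (ih x hx y hy)
          _ = L * (∑ k ∈ Finset.range (e :: ω).length, (s ^ a) ^ k) * dist y x ^ a := by
              rw [List.length_cons, Finset.sum_range_succ]; ring
  intro ω x hx y hy
  have hsum : (∑ k ∈ Finset.range ω.length, (s ^ a) ^ k) ≤ (1 - s ^ a)⁻¹ := by
    have h1r : 0 < 1 - s ^ a := by linarith
    rw [geom_sum_eq hsa1.ne ω.length,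
      show ((s ^ a) ^ ω.length - 1) / (s ^ a - 1) = (1 - (s ^ a) ^ ω.length) / (1 - s ^ a) by
        rw [← neg_div_neg_eq]; ring_nf, ← one_div]
    gcongr
    linarith [pow_nonneg hsa0.le ω.length]
  calc |Real.log (derW φ Dm ω y) - Real.log (derW φ Dm ω x)| ≤
      L * (∑ k ∈ Finset.range ω.length, (s ^ a) ^ k) * dist y x ^ a := key ω x hx y hy
    _ ≤ L * (1 - s ^ a)⁻¹ * dist y x ^ a := by
        apply mul_le_mul_of_nonneg_right _ (Real.rpow_nonneg dist_nonneg a)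
        exact mul_le_mul_of_nonneg_left hsum (by linarith)
    _ = L / (1 - s ^ a) * dist y x ^ a := by rw [div_eq_mul_inv]
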